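/- Let m ≥ 1 and let Z_1, …, Z_m, Z′ be independent standard Gaussian random variables, and let I be uniformly distributed on {1, …, m}, independent of (Z_1, …, Z_m, Z′). Set Y_0 = Z_1 + … + Z_m and let Y_1 = Y_0 − Z_I + Z′ be the sum after a random single replacement. Then the innovation ε = Y_1 − (1 − 1/m) Y_0 is Gaussian with mean 0 and variance 2 − 1/m, and ε is independent of Y_0. -/

import Mathlib

open MeasureTheory ProbabilityTheory Real
open scoped NNReal ENNReal

/-- map of a withDensity measure under a measurable equiv. -/
lemma map_withDensity_equiv {α β : Type*} [MeasurableSpace α] [MeasurableSpace β]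
    (e : α ≃ᵐ β) (μ : Measure α) {f : α → ℝ≥0∞} (hf : Measurable f) :
    (μ.withDensity f).map e = (μ.map e).withDensity (fun y => f (e.symm y)) := by
  ext s hs
  rw [Measure.map_apply e.measurable hs, withDensity_apply _ (e.measurable hs),
    withDensity_apply _ hs]
  have h2 := setLIntegral_map (μ := μ) hs (hf.comp e.symm.measurable) e.measurable
  simp only [Function.comp_apply, e.symm_apply_apply] at h2
  exact h2.symm

lemma withDensity_prod {α β : Type*} [MeasurableSpace α] [MeasurableSpace β]
    (μ : Measure α) (ν : Measure β) [SigmaFinite μ] [SigmaFinite ν]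
    {f : α → ℝ≥0∞} {g : β → ℝ≥0∞} (hf : Measurable f) (hg : Measurable g)
    [SigmaFinite (μ.withDensity f)] [SigmaFinite (ν.withDensity g)] :
    (μ.withDensity f).prod (ν.withDensity g)
      = (μ.prod ν).withDensity (fun z => f z.1 * g z.2) :=
  Measure.prod_eq fun s t hs ht => by
    rw [withDensity_apply _ (hs.prod ht), ← Measure.prod_restrict,
      lintegral_prod_mul hf.aemeasurable hg.aemeasurable,
      withDensity_apply _ hs, withDensity_apply _ ht]

lemma gaussianPDF_mul_rot {x y a b : ℝ} (h : x^2 + y^2 = a^2 + b^2) :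
    gaussianPDF 0 1 x * gaussianPDF 0 1 y = gaussianPDF 0 1 a * gaussianPDF 0 1 b := by
  have key : ∀ u v : ℝ, gaussianPDFReal 0 1 u * gaussianPDFReal 0 1 v
      = (Real.sqrt (2 * π))⁻¹ * (Real.sqrt (2 * π))⁻¹ * Real.exp (-(u^2 + v^2) / 2) := by
    intro u v
    simp only [gaussianPDFReal, NNReal.coe_one, mul_one, sub_zero]
    rw [mul_mul_mul_comm, ← Real.exp_add]
    congr 1
    ring
  rw [gaussianPDF, gaussianPDF, gaussianPDF, gaussianPDF, ← ENNReal.ofReal_mul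
    (gaussianPDFReal_nonneg _ _ _), ← ENNReal.ofReal_mul (gaussianPDFReal_nonneg _ _ _),
    key, key, h]

/-- the linear map of a 2x2 matrix on ℝ × ℝ -/
noncomputable def rotMap (p q r s : ℝ) : (ℝ × ℝ) →ₗ[ℝ] (ℝ × ℝ) where
  toFun z := (p * z.1 + q * z.2, r * z.1 + s * z.2)
  map_add' x y := by simp [Prod.ext_iff]; constructor <;> ring
  map_smul' c x := by simp [Prod.ext_iff, smul_eq_mul]; constructor <;> ring

lemma rotMap_det (p q r s : ℝ) : LinearMap.det (rotMap p q r s) = p * s - q * r := by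
  rw [← LinearMap.det_toMatrix (Module.Basis.finTwoProd ℝ) (rotMap p q r s), Matrix.det_fin_two]
  simp [LinearMap.toMatrix_apply, rotMap, Module.Basis.finTwoProd_zero, Module.Basis.finTwoProd_one]

lemma rot_gaussian (p q r s : ℝ) (h1 : p^2 + q^2 = 1) (h2 : r^2 + s^2 = 1)
    (h3 : p * r + q * s = 0) :
    Measure.map (fun z : ℝ × ℝ => (p * z.1 + q * z.2, r * z.1 + s * z.2))
        ((gaussianReal 0 1).prod (gaussianReal 0 1))
      = (gaussianReal 0 1).prod (gaussianReal 0 1) := by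
  -- derived algebraic relations
  have h4 : (p*r)^2 = (q*s)^2 := by
    have : p * r = -(q * s) := by linarith
    rw [this]; ring
  have hc1 : p^2 + r^2 = 1 := by linear_combination h4 + s^2 * h1 + (1 - p^2) * h2
  have hc2 : q^2 + s^2 = 1 := by linear_combination (-1) * h4 + r^2 * h1 + (1 - q^2) * h2
  have hp : p^2 = s^2 := by linarith
  have hq : q^2 = r^2 := by linarith
  have hc3 : p * q + r * s = 0 := by
    have h5 : (p*q + r*s)^2 = 0 := by linear_combination 2*q*s*h3 + q^2*hp - s^2*hq
    exact (pow_eq_zero_iff two_ne_zero).mp h5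
  have hdetsq : (p * s - q * r)^2 = 1 := by
    linear_combination (-2*q*s)*h3 + (s^2 + r^2)*h1 + h2 - h4
  have hdet : |p * s - q * r| = 1 := by
    rw [← Real.sqrt_sq_eq_abs, hdetsq, Real.sqrt_one]
  have hdetne : p * s - q * r ≠ 0 := by
    intro h0; rw [h0] at hdet; simp at hdet
  -- the measurable equiv
  have hTmeas : Measurable (fun z : ℝ × ℝ => (p * z.1 + q * z.2, r * z.1 + s * z.2)) := by
    fun_prop
  have hSmeas : Measurable (fun z : ℝ × ℝ => (p * z.1 + r * z.2, q * z.1 + s * z.2)) := by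
    fun_prop
  set e : (ℝ × ℝ) ≃ᵐ (ℝ × ℝ) :=
    { toFun := fun z => (p * z.1 + q * z.2, r * z.1 + s * z.2)
      invFun := fun z => (p * z.1 + r * z.2, q * z.1 + s * z.2)
      left_inv := fun z => by
        simp only [Prod.ext_iff]
        constructor
        · linear_combination z.1 * hc1 + z.2 * hc3
        · linear_combination z.1 * hc3 + z.2 * hc2
      right_inv := fun z => by
        simp only [Prod.ext_iff]
        constructor
        · linear_combination z.1 * h1 + z.2 * h3
        · linear_combination z.1 * h3 + z.2 * h2
      measurable_toFun := hTmeas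
      measurable_invFun := hSmeas } with he
  have hcoe : (fun z : ℝ × ℝ => (p * z.1 + q * z.2, r * z.1 + s * z.2)) = ⇑e := rfl
  have hγ : gaussianReal (0:ℝ) 1 = volume.withDensity (gaussianPDF 0 1) :=
    gaussianReal_of_var_ne_zero 0 one_ne_zero
  haveI : IsProbabilityMeasure (volume.withDensity (gaussianPDF 0 1)) := by
    rw [← hγ]; infer_instance
  have hGmeas : Measurable (fun z : ℝ × ℝ => gaussianPDF 0 1 z.1 * gaussianPDF 0 1 z.2) :=
    ((measurable_gaussianPDF 0 1).comp measurable_fst).mul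
      ((measurable_gaussianPDF 0 1).comp measurable_snd)
  have hmapvol : Measure.map (⇑e) (volume : Measure (ℝ × ℝ)) = volume := by
    have h0 : ⇑e = ⇑(rotMap p q r s) := rfl
    rw [h0, Measure.map_linearMap_addHaar_eq_smul_addHaar _ (by rw [rotMap_det]; exact hdetne),
      rotMap_det, abs_inv, hdet]
    norm_num
  have hGsymm : (fun y : ℝ × ℝ => (fun z : ℝ × ℝ => gaussianPDF 0 1 z.1 * gaussianPDF 0 1 z.2)
      (e.symm y)) = fun z : ℝ × ℝ => gaussianPDF 0 1 z.1 * gaussianPDF 0 1 z.2 := by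
    funext z
    show gaussianPDF 0 1 (p * z.1 + r * z.2) * gaussianPDF 0 1 (q * z.1 + s * z.2) = _
    exact gaussianPDF_mul_rot (by linear_combination z.1^2 * h1 + z.2^2 * h2 + 2*z.1*z.2*h3)
  rw [hcoe, hγ, withDensity_prod _ _ (measurable_gaussianPDF _ _) (measurable_gaussianPDF _ _),
    show ((volume : Measure ℝ).prod volume) = (volume : Measure (ℝ × ℝ)) from
      (Measure.volume_eq_prod ℝ ℝ).symm,
    map_withDensity_equiv e _ hGmeas, hmapvol, hGsymm]

section aux
lemma gaussian_scale (v : ℝ≥0) :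
    (gaussianReal 0 1).map (fun x => Real.sqrt v * x) = gaussianReal 0 v := by
  have h := gaussianReal_map_const_mul (μ := 0) (v := 1) (Real.sqrt v)
  have h2 : (fun x => Real.sqrt v * x) = (Real.sqrt v * ·) := rfl
  rw [h2, h, mul_zero]
  congr 1
  ext
  simp [Real.sq_sqrt v.coe_nonneg]

variable {Ω : Type*} [MeasureSpace Ω] [IsProbabilityMeasure (ℙ : Measure Ω)]

lemma aux_pair {X Y : Ω → ℝ} (hXm : Measurable X) (hYm : Measurable Y)
    (hind : IndepFun X Y ℙ) {a b α β : ℝ≥0}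
    (hXl : Measure.map X ℙ = gaussianReal 0 a) (hYl : Measure.map Y ℙ = gaussianReal 0 b)
    (p q r s : ℝ) (horth : p * r * (a:ℝ) + q * s * (b:ℝ) = 0)
    (hα : (α : ℝ) = p^2 * a + q^2 * b) (hβ : (β : ℝ) = r^2 * a + s^2 * b)
    (hα0 : α ≠ 0) (hβ0 : β ≠ 0) :
    Measure.map (fun ω => (p * X ω + q * Y ω, r * X ω + s * Y ω)) ℙ
      = (gaussianReal 0 α).prod (gaussianReal 0 β) := by
  have hαne : (α : ℝ) ≠ 0 := by exact_mod_cast hα0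
  have hβne : (β : ℝ) ≠ 0 := by exact_mod_cast hβ0
  set sa := Real.sqrt a with hsa
  set sb := Real.sqrt b with hsb
  set sα := Real.sqrt α with hsαd
  set sβ := Real.sqrt β with hsβd
  have hsa2 : sa^2 = (a:ℝ) := Real.sq_sqrt a.coe_nonneg
  have hsb2 : sb^2 = (b:ℝ) := Real.sq_sqrt b.coe_nonneg
  have hsα2 : sα^2 = (α:ℝ) := Real.sq_sqrt α.coe_nonneg
  have hsβ2 : sβ^2 = (β:ℝ) := Real.sq_sqrt β.coe_nonneg
  have hsαne : sα ≠ 0 := by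
    intro h; rw [h] at hsα2; simp at hsα2; exact hαne hsα2.symm
  have hsβne : sβ ≠ 0 := by
    intro h; rw [h] at hsβ2; simp at hsβ2; exact hβne hsβ2.symm
  set p' := p * sa / sα with hp'
  set q' := q * sb / sα with hq'
  set r' := r * sa / sβ with hr'
  set s' := s * sb / sβ with hs'
  have h1' : p'^2 + q'^2 = 1 := by
    rw [hp', hq', div_pow, div_pow, ← add_div, mul_pow, mul_pow, hsa2, hsb2, hsα2, ← hα,
      div_self hαne]
  have h2' : r'^2 + s'^2 = 1 := by
    rw [hr', hs', div_pow, div_pow, ← add_div, mul_pow, mul_pow, hsa2, hsb2, hsβ2, ← hβ,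
      div_self hβne]
  have h3' : p' * r' + q' * s' = 0 := by
    rw [hp', hq', hr', hs', div_mul_div_comm, div_mul_div_comm, ← add_div]
    have hexp : p * sa * (r * sa) + q * sb * (s * sb) = p * r * sa^2 + q * s * sb^2 := by ring
    rw [hexp, hsa2, hsb2, horth, zero_div]
  set fa := fun x : ℝ => sa * x with hfad
  set fb := fun x : ℝ => sb * x with hfbd
  set fα := fun x : ℝ => sα * x with hfαd
  set fβ := fun x : ℝ => sβ * x with hfβd
  have hfa : Measurable fa := by fun_prop
  have hfb : Measurable fb := by fun_prop
  have hfα : Measurable fα := by fun_prop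
  have hfβ : Measurable fβ := by fun_prop
  set T := fun z : ℝ × ℝ => (p * z.1 + q * z.2, r * z.1 + s * z.2) with hTd
  set R := fun z : ℝ × ℝ => (p' * z.1 + q' * z.2, r' * z.1 + s' * z.2) with hRd
  have hTmeas : Measurable T := by fun_prop
  have hRmeas : Measurable R := by fun_prop
  have hpairlaw : Measure.map (fun ω => (X ω, Y ω)) ℙ
      = (gaussianReal 0 a).prod (gaussianReal 0 b) := by
    rw [← hXl, ← hYl]
    exact (indepFun_iff_map_prod_eq_prod_map_map hXm.aemeasurable hYm.aemeasurable).mp hind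
  have hcomp : T ∘ Prod.map fa fb = (Prod.map fα fβ) ∘ R := by
    funext z
    refine Prod.ext ?_ ?_
    · show p * (sa * z.1) + q * (sb * z.2) = sα * (p' * z.1 + q' * z.2)
      rw [hp', hq']; field_simp
    · show r * (sa * z.1) + s * (sb * z.2) = sβ * (r' * z.1 + s' * z.2)
      rw [hr', hs']; field_simp
  calc Measure.map (fun ω => (p * X ω + q * Y ω, r * X ω + s * Y ω)) ℙ
      = Measure.map (T ∘ fun ω => (X ω, Y ω)) ℙ := rfl
    _ = Measure.map T (Measure.map (fun ω => (X ω, Y ω)) ℙ) :=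
        (Measure.map_map hTmeas (hXm.prodMk hYm)).symm
    _ = Measure.map T ((gaussianReal 0 a).prod (gaussianReal 0 b)) := by rw [hpairlaw]
    _ = Measure.map T (Measure.map (Prod.map fa fb)
          ((gaussianReal 0 1).prod (gaussianReal 0 1))) := by
        rw [← Measure.map_prod_map _ _ hfa hfb, gaussian_scale, gaussian_scale]
    _ = Measure.map (T ∘ Prod.map fa fb) ((gaussianReal 0 1).prod (gaussianReal 0 1)) :=
        Measure.map_map hTmeas (hfa.prodMap hfb)
    _ = Measure.map ((Prod.map fα fβ) ∘ R) ((gaussianReal 0 1).prod (gaussianReal 0 1)) := by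
        rw [hcomp]
    _ = Measure.map (Prod.map fα fβ)
          (Measure.map R ((gaussianReal 0 1).prod (gaussianReal 0 1))) :=
        (Measure.map_map (hfα.prodMap hfβ) hRmeas).symm
    _ = Measure.map (Prod.map fα fβ) ((gaussianReal 0 1).prod (gaussianReal 0 1)) := by
        rw [hRd, rot_gaussian p' q' r' s' h1' h2' h3']
    _ = ((gaussianReal 0 1).map fα).prod ((gaussianReal 0 1).map fβ) :=
        (Measure.map_prod_map _ _ hfα hfβ).symm
    _ = (gaussianReal 0 α).prod (gaussianReal 0 β) := by
        rw [hfαd, hfβd, gaussian_scale, gaussian_scale]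

lemma ae_zero_of_map_dirac {X : Ω → ℝ} (hXm : Measurable X)
    (hXl : Measure.map X ℙ = gaussianReal 0 0) : X =ᵐ[ℙ] fun _ => 0 := by
  have h := Measure.map_apply (μ := (ℙ : Measure Ω)) hXm ((measurableSet_singleton (0:ℝ)).compl)
  rw [hXl, gaussianReal_zero_var] at h
  simp only [Measure.dirac_apply' _ ((measurableSet_singleton (0:ℝ)).compl)] at h
  have h0 : Set.indicator {(0:ℝ)}ᶜ (1 : ℝ → ℝ≥0∞) 0 = 0 := by simp
  rw [h0] at h
  rw [Filter.EventuallyEq, ae_iff]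
  have hset : {ω | ¬ X ω = (fun _ => (0:ℝ)) ω} = X ⁻¹' {(0:ℝ)}ᶜ := by ext ω; simp
  rw [hset, ← h]

lemma aux_sum {X Y : Ω → ℝ} (hXm : Measurable X) (hYm : Measurable Y)
    (hind : IndepFun X Y ℙ) {a b : ℝ≥0}
    (hXl : Measure.map X ℙ = gaussianReal 0 a) (hYl : Measure.map Y ℙ = gaussianReal 0 b) :
    Measure.map (fun ω => X ω + Y ω) ℙ = gaussianReal 0 (a + b) := by
  by_cases ha : a = 0
  · subst ha
    have hae := ae_zero_of_map_dirac hXm hXl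
    have h2 : (fun ω => X ω + Y ω) =ᵐ[ℙ] Y := hae.mono fun ω h => by simp [h]
    rw [Measure.map_congr h2, hYl, zero_add]
  by_cases hb : b = 0
  · subst hb
    have hae := ae_zero_of_map_dirac hYm hYl
    have h2 : (fun ω => X ω + Y ω) =ᵐ[ℙ] X := hae.mono fun ω h => by simp [h]
    rw [Measure.map_congr h2, hXl, add_zero]
  · have hβ0 : a * b * (a + b) ≠ 0 := by
      simp only [ne_eq, mul_eq_zero, not_or]
      exact ⟨⟨ha, hb⟩, by simp [ha, hb]⟩
    have hmain := aux_pair (α := a + b) (β := a * b * (a + b)) hXm hYm hind hXl hYl 1 1 (b:ℝ) (-(a:ℝ))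
      (by ring) (by push_cast; ring) (by push_cast; ring)
      (by simp [ha, hb]) hβ0
    have hfun : (fun ω => X ω + Y ω) = Prod.fst ∘
        (fun ω => (1 * X ω + 1 * Y ω, (b:ℝ) * X ω + (-(a:ℝ)) * Y ω)) := by
      funext ω; simp
    rw [hfun, ← Measure.map_map measurable_fst (by fun_prop), hmain, Measure.map_fst_prod]
    simp

lemma sum_gaussian {ι : Type*} {f : ι → Ω → ℝ} (hmeas : ∀ i, Measurable (f i))
    (hindep : iIndepFun f ℙ)
    (hlaw : ∀ i, Measure.map (f i) ℙ = gaussianReal 0 1) (t : Finset ι) :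
    Measure.map (fun ω => ∑ i ∈ t, f i ω) ℙ = gaussianReal 0 (t.card : ℝ≥0) := by
  classical
  induction t using Finset.induction_on with
  | empty =>
      simp only [Finset.sum_empty, Finset.card_empty, Nat.cast_zero, gaussianReal_zero_var]
      rw [Measure.map_const]
      simp
  | @insert i t hi ih =>
      have hsum0 := hindep.indepFun_finsetSum_of_notMem hmeas hi
      have happ : (∑ j ∈ t, f j) = (fun ω => ∑ j ∈ t, f j ω) := by
        funext ω; simp [Finset.sum_apply]
      rw [happ] at hsum0
      have hfun : (fun ω => ∑ j ∈ insert i t, f j ω)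
          = fun ω => (∑ j ∈ t, f j ω) + f i ω := by
        funext ω; rw [Finset.sum_insert hi]; ring
      rw [hfun]
      have := aux_sum (by exact Finset.measurable_sum t fun j _ => hmeas j) (hmeas i)
        hsum0 ih (hlaw i)
      rw [this]
      congr 1
      rw [Finset.card_insert_of_notMem hi]
      push_cast
      ring

end aux


/-- Let `Z_1, ..., Z_m, Z'` be independent standard Gaussian random variables and let `I` be
uniformly distributed on `{1, ..., m}`, independent of `(Z_1, ..., Z_m, Z')`.  Set
`Y_0 = Z_1 + ... + Z_m` and let `Y_1 = Y_0 - Z_I + Z'` be the sum after a random single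
replacement.  Then the innovation `ε = Y_1 - (1 - 1/m) Y_0` is Gaussian with mean `0` and
variance `2 - 1/m`, and `ε` is independent of `Y_0`.

Here joint independence of `Z_1, ..., Z_m, Z'` is expressed via the family
`ZZ : Fin (m+1) → Ω → ℝ` whose first `m` coordinates are the `Z i` and whose last
coordinate is `Z'`, and independence of `I` from `(Z_1, ..., Z_m, Z')` is expressed as
independence of `I` from the random vector `ω ↦ (ZZ j ω)_j`. -/
theorem innovation_gaussian_and_indep (m : ℕ) (hm : 1 ≤ m)
    {Ω : Type*} [MeasureSpace Ω] [IsProbabilityMeasure (ℙ : Measure Ω)]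
    (Z : Fin m → Ω → ℝ) (Z' : Ω → ℝ) (I : Ω → Fin m)
    (hZmeas : ∀ i, Measurable (Z i)) (hZ'meas : Measurable Z') (hImeas : Measurable I)
    (hZ : ∀ i, Measure.map (Z i) ℙ = gaussianReal 0 1)
    (hZ' : Measure.map Z' ℙ = gaussianReal 0 1)
    (hI : ∀ i, ℙ {ω | I ω = i} = 1 / m)
    (hindepZ : iIndepFun
      (fun j : Fin (m + 1) => if h : (j : ℕ) < m then Z ⟨j, h⟩ else Z') ℙ)
    (hindepI : IndepFun I
      (fun ω (j : Fin (m + 1)) => if h : (j : ℕ) < m then Z ⟨j, h⟩ ω else Z' ω) ℙ) :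
    Measure.map
        (fun ω => ((∑ i, Z i ω) - Z (I ω) ω + Z' ω) - (1 - 1 / (m : ℝ)) * ∑ i, Z i ω) ℙ =
        gaussianReal 0 (2 - (m : ℝ≥0)⁻¹) ∧
      IndepFun
        (fun ω => ((∑ i, Z i ω) - Z (I ω) ω + Z' ω) - (1 - 1 / (m : ℝ)) * ∑ i, Z i ω)
        (fun ω => ∑ i, Z i ω) ℙ := by
  classical
  have hm0 : m ≠ 0 := by omega
  have hmR : (m : ℝ) ≠ 0 := Nat.cast_ne_zero.mpr hm0
  -- the family of all m+1 variables
  set F : Fin (m + 1) → Ω → ℝ := (fun j : Fin (m + 1) =>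
    if h : (j : ℕ) < m then Z ⟨j, h⟩ else Z') with hFdef
  have hFindep : iIndepFun F ℙ := hindepZ
  have hFmeas : ∀ j, Measurable (F j) := by
    intro j
    by_cases h : (j : ℕ) < m <;> simp only [hFdef, h, dif_pos, dif_neg, not_false_iff]
    · exact hZmeas _
    · exact hZ'meas
  have hFlaw : ∀ j, Measure.map (F j) ℙ = gaussianReal 0 1 := by
    intro j
    by_cases h : (j : ℕ) < m <;> simp only [hFdef, h, dif_pos, dif_neg, not_false_iff]
    · exact hZ _
    · exact hZ'
  set emb : Fin m → Fin (m + 1) := fun i => ⟨(i : ℕ), by omega⟩ with hembdef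
  have hembinj : Function.Injective emb := by
    intro i j h
    exact Fin.ext (by simpa [hembdef] using congrArg Fin.val h)
  have hFemb : ∀ i, F (emb i) = Z i := by
    intro i
    simp only [hFdef, hembdef, i.isLt, dif_pos]
  have hFlast : F (Fin.last m) = Z' := by
    simp only [hFdef, Fin.val_last, lt_self_iff_false, dif_neg, not_false_iff]
  set Tm : Finset (Fin (m + 1)) := Finset.univ.image emb with hTmdef
  have hcardTm : Tm.card = m := by
    rw [hTmdef, Finset.card_image_of_injective _ hembinj, Finset.card_univ, Fintype.card_fin]
  have hlastTm : Fin.last m ∉ Tm := by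
    simp only [hTmdef, Finset.mem_image, not_exists]
    intro i ⟨_, h⟩
    have := congrArg Fin.val h
    simp only [hembdef, Fin.val_last] at this
    omega
  have hVec : (fun ω (j : Fin (m + 1)) => if h : (j : ℕ) < m then Z ⟨j, h⟩ ω else Z' ω)
      = fun ω (j : Fin (m + 1)) => F j ω := by
    funext ω j
    by_cases h : (j : ℕ) < m <;> simp only [hFdef, h, dif_pos, dif_neg, not_false_iff]
  rw [hVec] at hindepI
  -- sum over all Z's
  have hsumZTm : ∀ ω, ∑ i, Z i ω = ∑ j ∈ Tm, F j ω := by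
    intro ω
    rw [hTmdef, Finset.sum_image (fun x _ y _ h => hembinj h)]
    exact Finset.sum_congr rfl fun i _ => by rw [hFemb]
  have hY0meas : Measurable (fun ω => ∑ i, Z i ω) :=
    Finset.measurable_sum _ fun i _ => hZmeas i
  -- measurability of ω ↦ Z (I ω) ω
  have hZImeas : Measurable (fun ω => Z (I ω) ω) := by
    have hrw : (fun ω => Z (I ω) ω) = fun ω => ∑ k : Fin m, if I ω = k then Z k ω else 0 := by
      funext ω
      rw [Finset.sum_ite_eq Finset.univ (I ω) (fun k => Z k ω)]
      simp
    rw [hrw]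
    refine Finset.measurable_sum _ fun k _ => Measurable.ite ?_ (hZmeas k) measurable_const
    exact hImeas (measurableSet_singleton k)
  have hεmeas : Measurable
      (fun ω => ((∑ i, Z i ω) - Z (I ω) ω + Z' ω) - (1 - 1 / (m : ℝ)) * ∑ i, Z i ω) :=
    ((hY0meas.sub hZImeas).add hZ'meas).sub (hY0meas.const_mul _)
  -- the per-value-of-I functions
  set gk : Fin m → Ω → ℝ × ℝ := fun k ω =>
    (((∑ i, Z i ω) - Z k ω + Z' ω) - (1 - 1 / (m : ℝ)) * ∑ i, Z i ω, ∑ i, Z i ω) with hgkdef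
  have hgkmeas : ∀ k, Measurable (gk k) := by
    intro k
    apply Measurable.prodMk
    · fun_prop
    · exact hY0meas
  set μ0 : Measure (ℝ × ℝ) :=
    (gaussianReal 0 (2 - (m : ℝ≥0)⁻¹)).prod (gaussianReal 0 (m : ℝ≥0)) with hμ0def
  -- MAIN CLAIM: law of gk is μ0, for every k
  have hgklaw : ∀ k, Measure.map (gk k) ℙ = μ0 := by
    intro k
    by_cases hm1 : m = 1
    · -- degenerate case m = 1 : gk k = (Z', Z k) up to pointwise algebra
      have hμ0eq : μ0 = (gaussianReal 0 1).prod (gaussianReal 0 1) := by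
        rw [hμ0def, hm1]
        norm_num
        rw [show (2:ℝ≥0) - 1 = 1 from by
          apply NNReal.coe_injective
          rw [NNReal.coe_sub (by norm_num : (1:ℝ≥0) ≤ 2)]
          norm_num]
      have hfun : gk k = fun ω => (Z' ω, ∑ i, Z i ω) := by
        funext ω
        simp only [hgkdef]
        refine Prod.ext ?_ ?_
        · show ((∑ i, Z i ω) - Z k ω + Z' ω) - (1 - 1 / (m : ℝ)) * ∑ i, Z i ω = Z' ω
          have hIk : ∑ i, Z i ω = Z k ω := by
            subst hm1
            rw [Fin.sum_univ_one]
            congr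
            exact (Subsingleton.elim _ _)
          have hm1R : (m : ℝ) = 1 := by rw [hm1]; norm_num
          rw [hIk, hm1R]
          norm_num
        · rfl
      have hind : IndepFun Z' (fun ω => ∑ i, Z i ω) ℙ := by
        have h1 := hFindep.indepFun_finsetSum_of_notMem hFmeas (s := Tm) hlastTm
        have h2 : (∑ j ∈ Tm, F j) = fun ω => ∑ i, Z i ω := by
          funext ω
          rw [Finset.sum_apply, ← hsumZTm ω]
        rw [h2, hFlast] at h1
        exact h1.symm
      have hsumlaw : Measure.map (fun ω => ∑ i, Z i ω) ℙ = gaussianReal 0 1 := by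
        have := sum_gaussian hFmeas hFindep hFlaw Tm
        have h2 : (fun ω => ∑ j ∈ Tm, F j ω) = fun ω => ∑ i, Z i ω := by
          funext ω
          rw [← hsumZTm ω]
        rw [h2, hcardTm] at this
        have hmcast : ((m : ℕ) : ℝ≥0) = 1 := by rw [hm1]; norm_num
        rw [hmcast] at this
        exact this
      rw [hfun, hμ0eq]
      exact ((indepFun_iff_map_prod_eq_prod_map_map hZ'meas.aemeasurable
        hY0meas.aemeasurable).mp hind).trans (by rw [hZ', hsumlaw])
    -- main case m ≥ 2
    have hm2 : 2 ≤ m := by omega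
    have hmemTm : emb k ∈ Tm := Finset.mem_image_of_mem _ (Finset.mem_univ k)
    set Tk := Tm.erase (emb k) with hTkdef
    set Sk : Ω → ℝ := fun ω => ∑ j ∈ Tk, F j ω with hSkdef
    have hSkmeas : Measurable Sk := Finset.measurable_sum _ fun j _ => hFmeas j
    have hcardTk : Tk.card = m - 1 := by
      rw [hTkdef, Finset.card_erase_of_mem hmemTm, hcardTm]
    have hSklaw : Measure.map Sk ℙ = gaussianReal 0 ((m - 1 : ℕ) : ℝ≥0) := by
      have := sum_gaussian hFmeas hFindep hFlaw Tk
      rw [hcardTk] at this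
      exact this
    have hindepAS : IndepFun (Z k) Sk ℙ := by
      have h1 := hFindep.indepFun_finsetSum_of_notMem hFmeas
        (Finset.notMem_erase (emb k) Tm)
      have h2 : (∑ j ∈ Tm.erase (emb k), F j) = Sk := by
        funext ω
        rw [Finset.sum_apply]
      rw [h2, hFemb] at h1
      exact h1.symm
    set p : ℝ := 1 / (m : ℝ) - 1 with hpdef
    set q : ℝ := 1 / (m : ℝ) with hqdef
    set α : ℝ≥0 := 1 - (m : ℝ≥0)⁻¹ with hαdef
    have h1m : (1 : ℝ) ≤ (m : ℝ) := by exact_mod_cast hm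
    have hminv_le : (m : ℝ≥0)⁻¹ ≤ 1 := by
      rw [← NNReal.coe_le_coe, NNReal.coe_inv, NNReal.coe_natCast, NNReal.coe_one]
      have := inv_anti₀ one_pos h1m
      simpa using this
    have hαcoe : (α : ℝ) = 1 - 1 / (m : ℝ) := by
      rw [hαdef, NNReal.coe_sub hminv_le]
      push_cast
      rw [one_div]
    have hαpos : (0 : ℝ) < (α : ℝ) := by
      rw [hαcoe]
      have h2R : (2 : ℝ) ≤ (m : ℝ) := by exact_mod_cast hm2
      have : 1 / (m : ℝ) < 1 := by
        rw [div_lt_one (by linarith)]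
        linarith
      linarith
    have hα0 : α ≠ 0 := by
      intro h
      rw [h] at hαpos
      simp at hαpos
    have hβ0 : (m : ℝ≥0) ≠ 0 := Nat.cast_ne_zero.mpr hm0
    have hb1R : (((m - 1 : ℕ) : ℝ≥0) : ℝ) = (m : ℝ) - 1 := by
      rw [NNReal.coe_natCast, Nat.cast_sub hm, Nat.cast_one]
    set U : Ω → ℝ := fun ω => p * Z k ω + q * Sk ω with hUdef
    set V : Ω → ℝ := fun ω => 1 * Z k ω + 1 * Sk ω with hVdef
    have hUmeas : Measurable U := ((hZmeas k).const_mul p).add (hSkmeas.const_mul q)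
    have hVmeas : Measurable V := ((hZmeas k).const_mul 1).add (hSkmeas.const_mul 1)
    have pair1 : Measure.map (fun ω => (U ω, V ω)) ℙ
        = (gaussianReal 0 α).prod (gaussianReal 0 (m : ℝ≥0)) := by
      refine aux_pair (a := 1) (b := ((m - 1 : ℕ) : ℝ≥0)) (α := α) (β := (m : ℝ≥0))
        (hZmeas k) hSkmeas hindepAS (hZ k) hSklaw p q 1 1 ?_ ?_ ?_ hα0 hβ0
      · rw [hb1R, hpdef, hqdef, NNReal.coe_one]
        field_simp
        ring
      · rw [hαcoe, hb1R, hpdef, hqdef, NNReal.coe_one]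
        field_simp
        ring
      · rw [hb1R, NNReal.coe_natCast]
        push_cast
        ring
    -- independence of Z' from the pair (U, V)
    have hdisj : Disjoint ({Fin.last m} : Finset (Fin (m + 1))) Tm :=
      Finset.disjoint_singleton_left.mpr hlastTm
    have hφmeas : Measurable (fun x : (({Fin.last m} : Finset (Fin (m + 1))) : Type _) → ℝ =>
        x ⟨Fin.last m, Finset.mem_singleton_self _⟩) := measurable_pi_apply _
    have hsummeas : Measurable (fun x : ((Tm : Finset (Fin (m + 1))) : Type _) → ℝ =>
        ∑ j : (Tm : Finset (Fin (m + 1))), if (j : Fin (m + 1)) = emb k then 0 else x j) := by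
      refine Finset.measurable_sum _ fun j _ => ?_
      by_cases hj : (j : Fin (m + 1)) = emb k
      · simp only [hj, if_true]
        exact measurable_const
      · simp only [hj, if_false]
        exact measurable_pi_apply j
    have hψmeas : Measurable (fun x : ((Tm : Finset (Fin (m + 1))) : Type _) → ℝ =>
        (p * x ⟨emb k, hmemTm⟩ + q * ∑ j : (Tm : Finset (Fin (m + 1))),
            (if (j : Fin (m + 1)) = emb k then 0 else x j),
         1 * x ⟨emb k, hmemTm⟩ + 1 * ∑ j : (Tm : Finset (Fin (m + 1))),
            (if (j : Fin (m + 1)) = emb k then 0 else x j))) := by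
      refine Measurable.prodMk ?_ ?_
      · exact ((measurable_pi_apply _).const_mul p).add (hsummeas.const_mul q)
      · exact ((measurable_pi_apply _).const_mul 1).add (hsummeas.const_mul 1)
    have hsumψ : ∀ ω, (∑ j : (Tm : Finset (Fin (m + 1))),
        (if (j : Fin (m + 1)) = emb k then 0 else F (j : Fin (m + 1)) ω)) = Sk ω := by
      intro ω
      rw [Finset.sum_coe_sort Tm (fun j => if j = emb k then 0 else F j ω),
        ← Finset.add_sum_erase Tm _ hmemTm, if_pos rfl, zero_add]
      exact Finset.sum_congr rfl fun j hj => if_neg (Finset.ne_of_mem_erase hj)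
    have hindepCW : IndepFun Z' (fun ω => (U ω, V ω)) ℙ := by
      refine ((hFindep.indepFun_finset {Fin.last m} Tm hdisj hFmeas).comp hφmeas hψmeas).congr
        (Filter.Eventually.of_forall fun ω => ?_) (Filter.Eventually.of_forall fun ω => ?_)
      · show F (Fin.last m) ω = Z' ω
        rw [hFlast]
      · show (p * F (emb k) ω + q * ∑ j : (Tm : Finset (Fin (m + 1))),
            (if (j : Fin (m + 1)) = emb k then 0 else F (j : Fin (m + 1)) ω),
          1 * F (emb k) ω + 1 * ∑ j : (Tm : Finset (Fin (m + 1))),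
            (if (j : Fin (m + 1)) = emb k then 0 else F (j : Fin (m + 1)) ω)) = (U ω, V ω)
        rw [hsumψ, hFemb]
    have hUlaw : Measure.map U ℙ = gaussianReal 0 α := by
      have h1 : U = Prod.fst ∘ (fun ω => (U ω, V ω)) := rfl
      rw [h1, ← Measure.map_map measurable_fst (hUmeas.prodMk hVmeas), pair1,
        Measure.map_fst_prod]
      simp
    have hindepZ'U : IndepFun Z' U ℙ := hindepCW.comp measurable_id measurable_fst
    have hsumUZ' : Measure.map (fun ω => U ω + Z' ω) ℙ = gaussianReal 0 (α + 1) :=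
      aux_sum hUmeas hZ'meas hindepZ'U.symm hUlaw hZ'
    have htriple : Measure.map (fun ω => (Z' ω, (U ω, V ω))) ℙ
        = (gaussianReal 0 1).prod ((gaussianReal 0 α).prod (gaussianReal 0 (m : ℝ≥0))) := by
      rw [← hZ', ← pair1]
      exact (indepFun_iff_map_prod_eq_prod_map_map hZ'meas.aemeasurable
        (hUmeas.prodMk hVmeas).aemeasurable).mp hindepCW
    have haddlaw : Measure.map (fun w : ℝ × ℝ => w.2 + w.1)
        ((gaussianReal 0 1).prod (gaussianReal 0 α)) = gaussianReal 0 (α + 1) := by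
      have hZU : Measure.map (fun ω => (Z' ω, U ω)) ℙ
          = (gaussianReal 0 1).prod (gaussianReal 0 α) := by
        rw [← hZ', ← hUlaw]
        exact (indepFun_iff_map_prod_eq_prod_map_map hZ'meas.aemeasurable
          hUmeas.aemeasurable).mp hindepZ'U
      rw [← hZU, Measure.map_map (by fun_prop) (hZ'meas.prodMk hUmeas)]
      exact hsumUZ'
    have hh2 : Measurable (fun z : ℝ × (ℝ × ℝ) => (z.2.1 + z.1, z.2.2)) := by fun_prop
    have hpairfinal : Measure.map (fun ω => (U ω + Z' ω, V ω)) ℙ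
        = (gaussianReal 0 (α + 1)).prod (gaussianReal 0 (m : ℝ≥0)) := by
      calc Measure.map (fun ω => (U ω + Z' ω, V ω)) ℙ
          = Measure.map ((fun z : ℝ × (ℝ × ℝ) => (z.2.1 + z.1, z.2.2))
              ∘ fun ω => (Z' ω, (U ω, V ω))) ℙ := rfl
        _ = Measure.map (fun z : ℝ × (ℝ × ℝ) => (z.2.1 + z.1, z.2.2))
              (Measure.map (fun ω => (Z' ω, (U ω, V ω))) ℙ) :=
            (Measure.map_map hh2 (hZ'meas.prodMk (hUmeas.prodMk hVmeas))).symm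
        _ = Measure.map (fun z : ℝ × (ℝ × ℝ) => (z.2.1 + z.1, z.2.2))
              ((gaussianReal 0 1).prod ((gaussianReal 0 α).prod
                (gaussianReal 0 (m : ℝ≥0)))) := by rw [htriple]
        _ = Measure.map (fun z : ℝ × (ℝ × ℝ) => (z.2.1 + z.1, z.2.2))
              (Measure.map MeasurableEquiv.prodAssoc
                (((gaussianReal 0 1).prod (gaussianReal 0 α)).prod
                  (gaussianReal 0 (m : ℝ≥0)))) := by rw [Measure.prodAssoc_prod]
        _ = Measure.map ((fun z : ℝ × (ℝ × ℝ) => (z.2.1 + z.1, z.2.2))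
              ∘ ⇑MeasurableEquiv.prodAssoc)
              (((gaussianReal 0 1).prod (gaussianReal 0 α)).prod
                (gaussianReal 0 (m : ℝ≥0))) :=
            Measure.map_map hh2 MeasurableEquiv.prodAssoc.measurable
        _ = Measure.map (Prod.map (fun w : ℝ × ℝ => w.2 + w.1) (id : ℝ → ℝ))
              (((gaussianReal 0 1).prod (gaussianReal 0 α)).prod
                (gaussianReal 0 (m : ℝ≥0))) := rfl
        _ = (Measure.map (fun w : ℝ × ℝ => w.2 + w.1)
              ((gaussianReal 0 1).prod (gaussianReal 0 α))).prod
              (Measure.map id (gaussianReal 0 (m : ℝ≥0))) :=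
            (Measure.map_prod_map _ _ (by fun_prop) measurable_id).symm
        _ = (gaussianReal 0 (α + 1)).prod (gaussianReal 0 (m : ℝ≥0)) := by
            rw [haddlaw, Measure.map_id]
    have hgkfun : gk k = fun ω => (U ω + Z' ω, V ω) := by
      funext ω
      have hsplit : ∑ i, Z i ω = Z k ω + Sk ω := by
        rw [hsumZTm ω, ← Finset.add_sum_erase Tm _ hmemTm, hFemb]
      refine Prod.ext ?_ ?_
      · show ((∑ i, Z i ω) - Z k ω + Z' ω) - (1 - 1 / (m : ℝ)) * ∑ i, Z i ω = U ω + Z' ω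
        rw [hsplit]
        show _ = (p * Z k ω + q * Sk ω) + Z' ω
        rw [hpdef, hqdef]
        ring
      · show (∑ i, Z i ω) = V ω
        rw [hsplit]
        show _ = 1 * Z k ω + 1 * Sk ω
        ring
    have hvar : α + 1 = 2 - (m : ℝ≥0)⁻¹ := by
      have h2c : (m : ℝ≥0)⁻¹ ≤ 2 := le_trans hminv_le one_le_two
      apply NNReal.coe_injective
      rw [NNReal.coe_add, hαcoe, NNReal.coe_sub h2c]
      push_cast
      rw [one_div]
      ring
    rw [hgkfun, hpairfinal, hvar, hμ0def]
  -- conditioning on I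
  set g : Ω → ℝ × ℝ := fun ω =>
    (((∑ i, Z i ω) - Z (I ω) ω + Z' ω) - (1 - 1 / (m : ℝ)) * ∑ i, Z i ω, ∑ i, Z i ω) with hgdef
  have hgmeas : Measurable g := hεmeas.prodMk hY0meas
  have hmapg : Measure.map g ℙ = μ0 := by
    ext s hs
    rw [Measure.map_apply hgmeas hs]
    have hunion : g ⁻¹' s = ⋃ k : Fin m, (gk k ⁻¹' s ∩ I ⁻¹' {k}) := by
      ext ω
      simp only [Set.mem_preimage, Set.mem_iUnion, Set.mem_inter_iff, Set.mem_singleton_iff]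
      constructor
      · intro h
        exact ⟨I ω, h, rfl⟩
      · rintro ⟨k, hk, rfl⟩
        exact hk
    rw [hunion, measure_iUnion ?_ ?_]
    rotate_left
    · intro k l hkl
      refine Set.disjoint_left.mpr fun ω h1 h2 => hkl ?_
      rw [← h1.2, ← h2.2]
    · intro k
      exact ((hgkmeas k) hs).inter (hImeas (measurableSet_singleton k))
    have hterm : ∀ k : Fin m, ℙ (gk k ⁻¹' s ∩ I ⁻¹' {k}) = (1 / (m : ℝ≥0∞)) * μ0 s := by
      intro k
      have hindk : IndepFun I (gk k) ℙ := by
        set Φ : (Fin (m + 1) → ℝ) → ℝ × ℝ := fun x =>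
          (((∑ i : Fin m, x (emb i)) - x (emb k) + x (Fin.last m))
              - (1 - 1 / (m : ℝ)) * ∑ i : Fin m, x (emb i),
            ∑ i : Fin m, x (emb i)) with hΦdef
        have hΦmeas : Measurable Φ := by
          have hsum : Measurable fun x : Fin (m + 1) → ℝ => ∑ i : Fin m, x (emb i) :=
            Finset.measurable_sum _ fun i _ => measurable_pi_apply _
          apply Measurable.prodMk
          · exact (((hsum.sub (measurable_pi_apply _)).add (measurable_pi_apply _)).sub
              (hsum.const_mul _))
          · exact hsum
        have hcomp : gk k = Φ ∘ (fun ω (j : Fin (m + 1)) => F j ω) := by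
          funext ω
          show _ = Φ (fun j => F j ω)
          simp only [hΦdef, hgkdef, hFemb, hFlast]
        rw [hcomp]
        exact hindepI.comp measurable_id hΦmeas
      rw [Set.inter_comm,
        hindk.measure_inter_preimage_eq_mul {k} s (measurableSet_singleton k) hs,
        ← Measure.map_apply (hgkmeas k) hs, hgklaw k]
      have hIk : I ⁻¹' {k} = {ω | I ω = k} := by ext ω; simp
      rw [hIk, hI k]
    rw [tsum_fintype]
    simp only [hterm]
    rw [Finset.sum_const, Finset.card_univ, Fintype.card_fin, nsmul_eq_mul, ← mul_assoc,
      one_div, ENNReal.mul_inv_cancel (by exact_mod_cast hm0) (ENNReal.natCast_ne_top m),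
      one_mul]
  -- conclude
  have hε : Measure.map
      (fun ω => ((∑ i, Z i ω) - Z (I ω) ω + Z' ω) - (1 - 1 / (m : ℝ)) * ∑ i, Z i ω) ℙ
      = gaussianReal 0 (2 - (m : ℝ≥0)⁻¹) := by
    have h1 : (fun ω => ((∑ i, Z i ω) - Z (I ω) ω + Z' ω) - (1 - 1 / (m : ℝ)) * ∑ i, Z i ω)
        = Prod.fst ∘ g := rfl
    rw [h1, ← Measure.map_map measurable_fst hgmeas, hmapg, hμ0def, Measure.map_fst_prod]
    simp
  have hY0 : Measure.map (fun ω => ∑ i, Z i ω) ℙ = gaussianReal 0 (m : ℝ≥0) := by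
    have h1 : (fun ω => ∑ i, Z i ω) = Prod.snd ∘ g := rfl
    rw [h1, ← Measure.map_map measurable_snd hgmeas, hmapg, hμ0def, Measure.map_snd_prod]
    simp
  refine ⟨hε, ?_⟩
  rw [indepFun_iff_map_prod_eq_prod_map_map hεmeas.aemeasurable hY0meas.aemeasurable,
    hε, hY0]
  exact hmapg
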